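/- Let Σ be an alphabet containing a distinguished symbol # and let Σ₀ = Σ \ {#}. Let I ⊆ ℕ × ℕ be a finite index set and let (A_i)_{i∈ℕ} and (B_j)_{j∈ℕ} be families of regular languages over Σ₀ such that A_i and B_j are nonempty for every (i,j) ∈ I. Let L = ⋃_{(i,j)∈I} A_i·{#}·B_j (concatenation of languages). Then there exists k < ω such that for all m, n ≥ 0 the set L ∩ {u#v : u ∈ Σ₀ⁿ, v ∈ Σ₀ᵐ} has at most k elements, if and only if for all (i,j) ∈ I both A_i and B_j are slender. -/

import Mathlib

/-- A language is slender if there is a uniform bound `k` on the number of its words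
of any given length. -/
def Slender {σ : Type*} (L : Set (List σ)) : Prop :=
  ∃ k : ℕ, ∀ ℓ : ℕ, {w ∈ L | w.length = ℓ}.Finite ∧ {w ∈ L | w.length = ℓ}.ncard ≤ k

/-- Regularity of a language of finite words: acceptance by a DFA with finitely many
states. -/
def IsRegularLang {σ : Type*} (L : Set (List σ)) : Prop :=
  Language.IsRegular L

private lemma hash_split {σ : Type*} {hash : σ} :
    ∀ (u₁ : List σ) {u₂ v₁ v₂ : List σ}, hash ∉ u₁ → hash ∉ u₂ →
      u₁ ++ [hash] ++ v₁ = u₂ ++ [hash] ++ v₂ → u₁ = u₂ ∧ v₁ = v₂ := by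
  intro u₁
  induction u₁ with
  | nil =>
    intro u₂ v₁ v₂ h1 h2 heq
    cases u₂ with
    | nil => simpa using heq
    | cons y t =>
      simp only [List.nil_append, List.cons_append, List.cons.injEq] at heq
      exact absurd (heq.1 ▸ List.mem_cons_self) h2
  | cons x t ih =>
    intro u₂ v₁ v₂ h1 h2 heq
    cases u₂ with
    | nil =>
      simp only [List.nil_append, List.cons_append, List.cons.injEq] at heq
      exact absurd (heq.1 ▸ List.mem_cons_self) h1
    | cons y t₂ =>
      simp only [List.cons_append, List.cons.injEq] at heq
      have h1' : hash ∉ t := fun h => h1 (List.mem_cons_of_mem _ h)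
      have h2' : hash ∉ t₂ := fun h => h2 (List.mem_cons_of_mem _ h)
      obtain ⟨e1, e2⟩ := ih h1' h2' heq.2
      exact ⟨by rw [heq.1, e1], e2⟩

private lemma ncard_prod' {α β : Type*} (s : Set α) (t : Set β) :
    (s ×ˢ t).ncard = s.ncard * t.ncard := by
  rw [← Nat.card_coe_set_eq, ← Nat.card_coe_set_eq, ← Nat.card_coe_set_eq,
    Nat.card_congr (Equiv.Set.prod s t), Nat.card_prod]

private lemma ncard_biUnion_le {α β : Type*} (I : Finset α) (f : α → Set β) :
    (⋃ p ∈ I, f p).ncard ≤ ∑ p ∈ I, (f p).ncard := by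
  classical
  induction I using Finset.induction with
  | empty => simp
  | @insert a s ha ih =>
    rw [Finset.set_biUnion_insert, Finset.sum_insert ha]
    exact (Set.ncard_union_le _ _).trans (Nat.add_le_add_left ih _)

/-- for a finite union `L = ⋃_{(i,j) ∈ I} A_i·{#}·B_j` with all `A_i, B_j`
nonempty regular languages over `Σ₀ = Σ \ {#}`, the sections
`L ∩ {u#v : u ∈ Σ₀ⁿ, v ∈ Σ₀ᵐ}` have uniformly bounded size iff all the `A_i` and `B_j`
are slender. -/
theorem bounded_sections_iff_slender
    {σ : Type*} [Fintype σ] (hash : σ) (I : Finset (ℕ × ℕ))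
    (A B : ℕ → Set (List σ))
    (hA₀ : ∀ p ∈ I, ∀ w ∈ A p.1, hash ∉ w)
    (hB₀ : ∀ p ∈ I, ∀ w ∈ B p.2, hash ∉ w)
    (hAreg : ∀ p ∈ I, IsRegularLang (A p.1)) (hBreg : ∀ p ∈ I, IsRegularLang (B p.2))
    (hAne : ∀ p ∈ I, (A p.1).Nonempty) (hBne : ∀ p ∈ I, (B p.2).Nonempty) :
    (∃ k : ℕ, ∀ m n : ℕ,
      ((⋃ p ∈ I, {w | ∃ a ∈ A p.1, ∃ b ∈ B p.2, w = a ++ [hash] ++ b}) ∩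
        {w : List σ | ∃ u v : List σ, hash ∉ u ∧ hash ∉ v ∧
          u.length = n ∧ v.length = m ∧ w = u ++ [hash] ++ v}).Finite ∧
      ((⋃ p ∈ I, {w | ∃ a ∈ A p.1, ∃ b ∈ B p.2, w = a ++ [hash] ++ b}) ∩
        {w : List σ | ∃ u v : List σ, hash ∉ u ∧ hash ∉ v ∧
          u.length = n ∧ v.length = m ∧ w = u ++ [hash] ++ v}).ncard ≤ k) ↔
    (∀ p ∈ I, Slender (A p.1) ∧ Slender (B p.2)) := by
  classical
  set S : ℕ → ℕ → Set (List σ) := fun m n =>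
    ((⋃ p ∈ I, {w | ∃ a ∈ A p.1, ∃ b ∈ B p.2, w = a ++ [hash] ++ b}) ∩
      {w : List σ | ∃ u v : List σ, hash ∉ u ∧ hash ∉ v ∧
        u.length = n ∧ v.length = m ∧ w = u ++ [hash] ++ v}) with hS
  have hsec : ∀ m n : ℕ, S m n =
      ⋃ p ∈ I, (fun q : List σ × List σ => q.1 ++ [hash] ++ q.2) ''
        ({a ∈ A p.1 | a.length = n} ×ˢ {b ∈ B p.2 | b.length = m}) := by
    intro m n
    ext w
    constructor
    · rintro ⟨hw1, u, v, hu, hv, hun, hvm, rfl⟩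
      simp only [Set.mem_iUnion] at hw1 ⊢
      obtain ⟨p, hp, a, ha, b, hb, heq⟩ := hw1
      obtain ⟨e1, e2⟩ := hash_split a (hA₀ p hp a ha) hu heq.symm
      refine ⟨p, hp, (u, v), ⟨⟨e1 ▸ ha, hun⟩, ⟨e2 ▸ hb, hvm⟩⟩, rfl⟩
    · intro hw
      simp only [Set.mem_iUnion] at hw
      obtain ⟨p, hp, ⟨a, b⟩, ⟨⟨ha, han⟩, ⟨hb, hbm⟩⟩, rfl⟩ := hw
      refine ⟨Set.mem_iUnion₂.2 ⟨p, hp, a, ha, b, hb, rfl⟩,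
        a, b, hA₀ p hp a ha, hB₀ p hp b hb, han, hbm, rfl⟩
  constructor
  · rintro ⟨k, hk⟩ p hp
    constructor
    · -- A slender
      refine ⟨k, fun n => ?_⟩
      obtain ⟨b, hb⟩ := hBne p hp
      have hkmn := hk b.length n
      have hinj : Set.InjOn (fun u : List σ => u ++ [hash] ++ b)
          {a ∈ A p.1 | a.length = n} := by
        intro u₁ hu₁ u₂ hu₂ heq
        exact (hash_split u₁ (hA₀ p hp u₁ hu₁.1) (hA₀ p hp u₂ hu₂.1) heq).1
      have hsub : (fun u : List σ => u ++ [hash] ++ b) '' {a ∈ A p.1 | a.length = n}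
          ⊆ S b.length n := by
        rintro _ ⟨u, ⟨hu, hun⟩, rfl⟩
        refine ⟨Set.mem_iUnion₂.2 ⟨p, hp, u, hu, b, hb, rfl⟩,
          u, b, hA₀ p hp u hu, hB₀ p hp b hb, hun, rfl, rfl⟩
      have hfin := Set.Finite.of_finite_image (hkmn.1.subset hsub) hinj
      refine ⟨hfin, ?_⟩
      calc {a ∈ A p.1 | a.length = n}.ncard
          = ((fun u : List σ => u ++ [hash] ++ b) '' {a ∈ A p.1 | a.length = n}).ncard :=
            (Set.ncard_image_of_injOn hinj).symm
        _ ≤ (S b.length n).ncard := Set.ncard_le_ncard hsub hkmn.1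
        _ ≤ k := hkmn.2
    · -- B slender
      refine ⟨k, fun m => ?_⟩
      obtain ⟨a, ha⟩ := hAne p hp
      have hkmn := hk m a.length
      have hinj : Set.InjOn (fun v : List σ => a ++ [hash] ++ v)
          {b ∈ B p.2 | b.length = m} := by
        intro v₁ _ v₂ _ heq
        exact (hash_split a (hA₀ p hp a ha) (hA₀ p hp a ha) heq).2
      have hsub : (fun v : List σ => a ++ [hash] ++ v) '' {b ∈ B p.2 | b.length = m}
          ⊆ S m a.length := by
        rintro _ ⟨v, ⟨hv, hvm⟩, rfl⟩
        refine ⟨Set.mem_iUnion₂.2 ⟨p, hp, a, ha, v, hv, rfl⟩,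
          a, v, hA₀ p hp a ha, hB₀ p hp v hv, rfl, hvm, rfl⟩
      have hfin := Set.Finite.of_finite_image (hkmn.1.subset hsub) hinj
      refine ⟨hfin, ?_⟩
      calc {b ∈ B p.2 | b.length = m}.ncard
          = ((fun v : List σ => a ++ [hash] ++ v) '' {b ∈ B p.2 | b.length = m}).ncard :=
            (Set.ncard_image_of_injOn hinj).symm
        _ ≤ (S m a.length).ncard := Set.ncard_le_ncard hsub hkmn.1
        _ ≤ k := hkmn.2
  · intro h
    have hex : ∀ p : ℕ × ℕ, ∃ kp : ℕ, p ∈ I → ∀ n m : ℕ,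
        {a ∈ A p.1 | a.length = n}.Finite ∧ {b ∈ B p.2 | b.length = m}.Finite ∧
        {a ∈ A p.1 | a.length = n}.ncard * {b ∈ B p.2 | b.length = m}.ncard ≤ kp := by
      intro p
      by_cases hp : p ∈ I
      · obtain ⟨⟨kA, hkA⟩, ⟨kB, hkB⟩⟩ := h p hp
        exact ⟨kA * kB, fun _ n m => ⟨(hkA n).1, (hkB m).1,
          Nat.mul_le_mul (hkA n).2 (hkB m).2⟩⟩
      · exact ⟨0, fun h' => absurd h' hp⟩
    choose K hK using hex
    refine ⟨∑ p ∈ I, K p, fun m n => ?_⟩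
    show (S m n).Finite ∧ (S m n).ncard ≤ ∑ p ∈ I, K p
    rw [hsec m n]
    have hfin : ∀ p ∈ I, ((fun q : List σ × List σ => q.1 ++ [hash] ++ q.2) ''
        ({a ∈ A p.1 | a.length = n} ×ˢ {b ∈ B p.2 | b.length = m})).Finite := by
      intro p hp
      exact (((hK p hp n m).1.prod (hK p hp n m).2.1).image _)
    refine ⟨Set.Finite.biUnion I.finite_toSet hfin, ?_⟩
    refine (ncard_biUnion_le I _).trans (Finset.sum_le_sum fun p hp => ?_)
    calc ((fun q : List σ × List σ => q.1 ++ [hash] ++ q.2) ''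
          ({a ∈ A p.1 | a.length = n} ×ˢ {b ∈ B p.2 | b.length = m})).ncard
        ≤ ({a ∈ A p.1 | a.length = n} ×ˢ {b ∈ B p.2 | b.length = m}).ncard :=
          Set.ncard_image_le ((hK p hp n m).1.prod (hK p hp n m).2.1)
      _ = {a ∈ A p.1 | a.length = n}.ncard * {b ∈ B p.2 | b.length = m}.ncard :=
          ncard_prod' _ _
      _ ≤ K p := (hK p hp n m).2.2
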